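/- Let (a_n)_{n≥0} be a sequence of nonzero complex numbers satisfying |a_0| ≥ |a_1| ≥ |a_2| ≥ ⋯ and ∑_{n=0}^∞ |a_n|² < ∞, let T be the corresponding weighted shift, and let H_1 denote the closed linear span of {e_n : n ≥ 1} in H. Then the map F : J ↦ {S e_0 : S ∈ J} is an inclusion-preserving bijection (a lattice isomorphism) from the set of closed two-sided ideals of A_T onto the set of closed T-invariant subspaces of H_1: for every closed ideal J of A_T the set {S e_0 : S ∈ J} is a closed T-invariant subspace of H_1, every closed T-invariant subspace of H_1 arises this way, distinct closed ideals have distinct images, and J_1 ⊆ J_2 if and only if F(J_1) ⊆ F(J_2). -/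

import Mathlib

set_option synthInstance.maxHeartbeats 800000
set_option maxHeartbeats 1600000

noncomputable section

/-- `H = ℓ²(ℕ)` over `ℂ`. -/
abbrev H : Type := lp (fun _ : ℕ => ℂ) 2

/-- The standard orthonormal basis of `ℓ²(ℕ)`. -/
def e (n : ℕ) : H := lp.single 2 n 1

/-- `A_T`: the operator-norm closure of the polynomials in `T` with zero constant term. -/
def polyAlg (T : H →L[ℂ] H) : Set (H →L[ℂ] H) :=
  closure ((NonUnitalAlgebra.adjoin ℂ {T} : NonUnitalSubalgebra ℂ (H →L[ℂ] H)) :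
    Set (H →L[ℂ] H))

/-- A closed two-sided ideal of the (non-unital) operator algebra `A_T`. -/
def IsClosedIdeal (T : H →L[ℂ] H) (J : Set (H →L[ℂ] H)) : Prop :=
  J ⊆ polyAlg T ∧ IsClosed J ∧ (0 : H →L[ℂ] H) ∈ J ∧
  (∀ x ∈ J, ∀ y ∈ J, x + y ∈ J) ∧
  (∀ c : ℂ, ∀ x ∈ J, c • x ∈ J) ∧
  (∀ a ∈ polyAlg T, ∀ x ∈ J, a * x ∈ J ∧ x * a ∈ J)

/-- `H₁`: the closed linear span of `{e_n : n ≥ 1}` in `H`. -/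
def H1 : Set H :=
  closure ((Submodule.span ℂ {x : H | ∃ n : ℕ, 1 ≤ n ∧ x = e n} : Submodule ℂ H) : Set H)

/-- A closed `T`-invariant subspace of `H₁`. -/
def IsInvSubspace (T : H →L[ℂ] H) (K : Set H) : Prop :=
  K ⊆ H1 ∧ IsClosed K ∧ (0 : H) ∈ K ∧
  (∀ x ∈ K, ∀ y ∈ K, x + y ∈ K) ∧
  (∀ c : ℂ, ∀ x ∈ K, c • x ∈ K) ∧
  (∀ x ∈ K, T x ∈ K)

/-- The map `F : J ↦ {S e₀ : S ∈ J}`. -/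
def Fmap (J : Set (H →L[ℂ] H)) : Set H := (fun S : H →L[ℂ] H => S (e 0)) '' J

/-! ### Auxiliary material -/

section Aux

lemma e_apply (n j : ℕ) : (e n : ∀ _ : ℕ, ℂ) j = if j = n then 1 else 0 := by
  simp [e, lp.single_apply, Pi.single_apply]

lemma orthonormal_e : Orthonormal ℂ e := by
  rw [orthonormal_iff_ite]
  intro i j
  rw [e, lp.inner_single_left]
  simp [e_apply, eq_comm]

lemma hasSum_e (f : H) : HasSum (fun n => f n • e n) f := by
  have h : ∀ n, f n • e n = lp.single 2 n (f n) := by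
    intro n; rw [e, ← lp.single_smul]; norm_num
  simp_rw [h]
  exact lp.hasSum_single (by norm_num) f

lemma dense_span_e : Dense (Submodule.span ℂ (Set.range e) : Set H) := by
  intro f
  have h := (hasSum_e f).tendsto_sum_nat
  refine mem_closure_of_tendsto h (Filter.Eventually.of_forall fun N => ?_)
  exact Submodule.sum_mem _ fun n _ =>
    Submodule.smul_mem _ _ (Submodule.subset_span ⟨n, rfl⟩)

lemma clm_ext {S S' : H →L[ℂ] H} (h : ∀ n, S (e n) = S' (e n)) : S = S' := by
  refine ContinuousLinearMap.ext_on dense_span_e ?_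
  rintro x ⟨n, rfl⟩
  exact h n

/-- coordinate functional -/
def coord (i : ℕ) : H →L[ℂ] ℂ :=
  LinearMap.mkContinuous
    { toFun := fun f => f i
      map_add' := fun f g => by simp
      map_smul' := fun c f => by simp }
    1 (fun f => by rw [one_mul]; exact lp.norm_apply_le_norm (by norm_num) f i)

@[simp] lemma coord_apply (i : ℕ) (f : H) : coord i f = f i := rfl

/-- the weight products -/
def w (a : ℕ → ℂ) (n : ℕ) : ℂ := ∏ i ∈ Finset.range n, a i

lemma w_ne (a : ℕ → ℂ) (ha : ∀ n, a n ≠ 0) (n : ℕ) : w a n ≠ 0 :=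
  Finset.prod_ne_zero_iff.2 fun i _ => ha i

variable {a : ℕ → ℂ} {T : H →L[ℂ] H}

lemma Tpow_e (hT : ∀ n, T (e n) = a n • e (n + 1)) (n k : ℕ) :
    (T ^ n) (e k) = (∏ i ∈ Finset.range n, a (k + i)) • e (k + n) := by
  induction n generalizing k with
  | zero => simp
  | succ n ih =>
    rw [pow_succ, ContinuousLinearMap.mul_apply, hT k, map_smul, ih (k+1), smul_smul]
    have hc : (∏ i ∈ Finset.range (n+1), a (k+i)) = a k * ∏ i ∈ Finset.range n, a (k+1+i) := by
      rw [Finset.prod_range_succ', mul_comm]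
      congr 1
      exact Finset.prod_congr rfl fun i _ => by congr 1; omega
    rw [hc, show k + 1 + n = k + (n+1) by omega]

lemma Tpow_e0 (hT : ∀ n, T (e n) = a n • e (n + 1)) (n : ℕ) :
    (T ^ n) (e 0) = w a n • e n := by
  simpa [w] using Tpow_e hT n 0

lemma T_mem : T ∈ polyAlg T :=
  subset_closure (NonUnitalAlgebra.subset_adjoin ℂ rfl)

lemma Tpow_mem_adjoin (n : ℕ) (hn : 1 ≤ n) :
    T ^ n ∈ NonUnitalAlgebra.adjoin ℂ {T} := by
  obtain ⟨m, rfl⟩ : ∃ m, n = m + 1 := ⟨n - 1, by omega⟩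
  clear hn
  induction m with
  | zero => simpa using NonUnitalAlgebra.subset_adjoin ℂ (show T ∈ ({T} : Set (H →L[ℂ] H)) from rfl)
  | succ m ih =>
    rw [pow_succ]
    exact mul_mem ih (NonUnitalAlgebra.subset_adjoin ℂ rfl)

lemma mem_polyAlg_iff {S : H →L[ℂ] H} :
    S ∈ polyAlg T ↔ S ∈ (NonUnitalAlgebra.adjoin ℂ {T} : NonUnitalSubalgebra ℂ (H →L[ℂ] H)).topologicalClosure :=
  Iff.rfl

lemma polyAlg_add {x y : H →L[ℂ] H} (hx : x ∈ polyAlg T) (hy : y ∈ polyAlg T) :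
    x + y ∈ polyAlg T :=
  add_mem (mem_polyAlg_iff.1 hx) (mem_polyAlg_iff.1 hy)

lemma polyAlg_sub {x y : H →L[ℂ] H} (hx : x ∈ polyAlg T) (hy : y ∈ polyAlg T) :
    x - y ∈ polyAlg T :=
  sub_mem (mem_polyAlg_iff.1 hx) (mem_polyAlg_iff.1 hy)

lemma polyAlg_zero : (0 : H →L[ℂ] H) ∈ polyAlg T :=
  mem_polyAlg_iff.2 (zero_mem _)

lemma polyAlg_smul (c : ℂ) {x : H →L[ℂ] H} (hx : x ∈ polyAlg T) : c • x ∈ polyAlg T :=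
  mem_polyAlg_iff.2 (SMulMemClass.smul_mem c (mem_polyAlg_iff.1 hx))

lemma polyAlg_mul {x y : H →L[ℂ] H} (hx : x ∈ polyAlg T) (hy : y ∈ polyAlg T) :
    x * y ∈ polyAlg T :=
  mul_mem (mem_polyAlg_iff.1 hx) (mem_polyAlg_iff.1 hy)

lemma commute_of_mem {S : H →L[ℂ] H} (hS : S ∈ polyAlg T) : S * T = T * S := by
  have hclosed : IsClosed {S : H →L[ℂ] H | S * T = T * S} :=
    isClosed_eq (continuous_id.mul continuous_const) (continuous_const.mul continuous_id)
  have hsub : (NonUnitalAlgebra.adjoin ℂ {T} : Set (H →L[ℂ] H)) ⊆ {S | S * T = T * S} := by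
    intro x hx
    induction hx using NonUnitalAlgebra.adjoin_induction with
    | mem x hx => rw [Set.mem_singleton_iff] at hx; subst hx; rfl
    | add x y _ _ hx hy => simp only [Set.mem_setOf_eq] at *; rw [add_mul, mul_add, hx, hy]
    | zero => simp
    | mul x y _ _ hx hy =>
        simp only [Set.mem_setOf_eq] at *
        rw [mul_assoc, hy, ← mul_assoc, hx, mul_assoc]
    | smul c x _ hx => simp only [Set.mem_setOf_eq] at *; rw [smul_mul_assoc, hx, mul_smul_comm]
  exact closure_minimal hsub hclosed hS

lemma apply_e_eq (ha : ∀ n, a n ≠ 0) (hT : ∀ n, T (e n) = a n • e (n + 1))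
    {S : H →L[ℂ] H} (hS : S ∈ polyAlg T) (n : ℕ) :
    S (e n) = (w a n)⁻¹ • (T ^ n) (S (e 0)) := by
  have hcomm : S * T ^ n = T ^ n * S :=
    ((Commute.symm (commute_of_mem hS)).pow_left n).symm
  have he : e n = (w a n)⁻¹ • (T ^ n) (e 0) := by
    rw [Tpow_e0 hT, smul_smul, inv_mul_cancel₀ (w_ne a ha n), one_smul]
  rw [he, map_smul]
  congr 1
  have h := congrArg (fun A : H →L[ℂ] H => A (e 0)) hcomm
  simpa using h

lemma eq_of_apply_e0_eq (ha : ∀ n, a n ≠ 0) (hT : ∀ n, T (e n) = a n • e (n + 1))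
    {S S' : H →L[ℂ] H} (hS : S ∈ polyAlg T) (hS' : S' ∈ polyAlg T)
    (h : S (e 0) = S' (e 0)) : S = S' :=
  clm_ext fun n => by rw [apply_e_eq ha hT hS, apply_e_eq ha hT hS', h]

lemma coord_zero_of_mem (hT : ∀ n, T (e n) = a n • e (n + 1))
    {S : H →L[ℂ] H} (hS : S ∈ polyAlg T) : ∀ v : H, (S v) 0 = 0 := by
  have hclosed : IsClosed {S : H →L[ℂ] H | ∀ v : H, (S v) 0 = 0} := by
    have h : {S : H →L[ℂ] H | ∀ v : H, (S v) 0 = 0} =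
        ⋂ v : H, {S : H →L[ℂ] H | coord 0 (S v) = 0} := by
      ext S; simp
    rw [h]
    refine isClosed_iInter fun v => isClosed_eq ?_ continuous_const
    exact (coord 0).continuous.comp ((ContinuousLinearMap.apply ℂ H v).continuous)
  have hT0 : ∀ v : H, (T v) 0 = 0 := by
    intro v
    have h2 : HasSum (fun n => coord 0 (T (v n • e n))) (coord 0 (T v)) :=
      ((hasSum_e v).mapL T).mapL (coord 0)
    have h3 : ∀ n : ℕ, coord 0 (T (v n • e n)) = 0 := by
      intro n
      rw [map_smul, hT n, map_smul, map_smul, coord_apply, e_apply]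
      simp
    rw [show ((T v) 0 = 0) ↔ (coord 0 (T v) = 0) from Iff.rfl]
    refine (h2.unique ?_)
    have h4 : (fun n => coord 0 (T (v n • e n))) = fun _ : ℕ => (0:ℂ) := funext h3
    rw [h4]
    exact hasSum_zero
  have hsub : (NonUnitalAlgebra.adjoin ℂ {T} : Set (H →L[ℂ] H)) ⊆
      {S | ∀ v : H, (S v) 0 = 0} := by
    intro x hx
    induction hx using NonUnitalAlgebra.adjoin_induction with
    | mem x hx => rw [Set.mem_singleton_iff] at hx; subst hx; exact hT0
    | add x y _ _ hx hy =>
        intro v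
        have hx' : coord 0 (x v) = 0 := hx v
        have hy' : coord 0 (y v) = 0 := hy v
        show coord 0 ((x + y) v) = 0
        rw [ContinuousLinearMap.add_apply, map_add, hx', hy', add_zero]
    | zero => intro v; simp
    | mul x y _ _ hx hy => intro v; exact hx (y v)
    | smul c x _ hx =>
        intro v
        have hx' : coord 0 (x v) = 0 := hx v
        show coord 0 ((c • x) v) = 0
        rw [ContinuousLinearMap.smul_apply, map_smul, hx', smul_zero]
  exact closure_minimal hsub hclosed hS

lemma mem_H1_iff {f : H} : f ∈ H1 ↔ f 0 = 0 := by
  constructor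
  · intro hf
    have hclosed : IsClosed {f : H | coord 0 f = 0} :=
      isClosed_eq (coord 0).continuous continuous_const
    have hsub : ((Submodule.span ℂ {x : H | ∃ n : ℕ, 1 ≤ n ∧ x = e n} : Submodule ℂ H) : Set H)
        ⊆ {f : H | coord 0 f = 0} := by
      intro x hx
      induction hx using Submodule.span_induction with
      | mem x hx =>
          obtain ⟨n, hn, rfl⟩ := hx
          have h0 : ¬ ((0:ℕ) = n) := by omega
          rw [Set.mem_setOf_eq, coord_apply, e_apply, if_neg h0]
      | zero => simp
      | add x y _ _ hx hy => simp only [Set.mem_setOf_eq, map_add] at *; rw [hx, hy, add_zero]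
      | smul c x _ hx => simp only [Set.mem_setOf_eq, map_smul] at *; rw [hx, smul_zero]
    exact closure_minimal hsub hclosed hf
  · intro hf
    have h := (hasSum_e f).tendsto_sum_nat
    refine mem_closure_of_tendsto h (Filter.Eventually.of_forall fun N => ?_)
    refine Submodule.sum_mem _ fun n _ => ?_
    rcases Nat.eq_zero_or_pos n with rfl | hn
    · simp [hf]
    · exact Submodule.smul_mem _ _ (Submodule.subset_span ⟨n, hn, rfl⟩)

/-- elements of the closed algebra map an invariant subspace into itself -/
lemma mapsK_of_mem {K : Set H} (hK : IsInvSubspace T K)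
    {S : H →L[ℂ] H} (hS : S ∈ polyAlg T) : ∀ v ∈ K, S v ∈ K := by
  obtain ⟨-, hKc, hK0, hKadd, hKsmul, hKT⟩ := hK
  have hclosed : IsClosed {S : H →L[ℂ] H | ∀ v ∈ K, S v ∈ K} := by
    have h : {S : H →L[ℂ] H | ∀ v ∈ K, S v ∈ K} =
        ⋂ v ∈ K, (fun S : H →L[ℂ] H => S v) ⁻¹' K := by
      ext S; simp
    rw [h]
    exact isClosed_biInter fun v _ =>
      hKc.preimage (ContinuousLinearMap.apply ℂ H v).continuous
  have hsub : (NonUnitalAlgebra.adjoin ℂ {T} : Set (H →L[ℂ] H)) ⊆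
      {S | ∀ v ∈ K, S v ∈ K} := by
    intro x hx
    induction hx using NonUnitalAlgebra.adjoin_induction with
    | mem x hx => rw [Set.mem_singleton_iff] at hx; subst hx; exact hKT
    | add x y _ _ hx hy => exact fun v hv => hKadd _ (hx v hv) _ (hy v hv)
    | zero => intro v hv; simpa using hK0
    | mul x y _ _ hx hy => exact fun v hv => hx _ (hy v hv)
    | smul c x _ hx => exact fun v hv => hKsmul c _ (hx v hv)
  exact closure_minimal hsub hclosed hS

lemma Tpow_mapsK {K : Set H} (hKT : ∀ x ∈ K, T x ∈ K) (n : ℕ) :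
    ∀ v ∈ K, (T ^ n) v ∈ K := by
  induction n with
  | zero => intro v hv; simpa using hv
  | succ n ih =>
    intro v hv
    rw [pow_succ, ContinuousLinearMap.mul_apply]
    exact ih _ (hKT v hv)

/-- An element of the closed algebra whose value at `e 0` lies in `K` maps `H1` into `K`. -/
lemma mapsH1_of_mem (ha : ∀ n, a n ≠ 0) (hT : ∀ n, T (e n) = a n • e (n + 1))
    {K : Set H} (hK : IsInvSubspace T K)
    {S : H →L[ℂ] H} (hS : S ∈ polyAlg T) (h0 : S (e 0) ∈ K) :
    ∀ v ∈ H1, S v ∈ K := by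
  obtain ⟨-, hKc, hK0, hKadd, hKsmul, hKT⟩ := hK
  have hen : ∀ n : ℕ, 1 ≤ n → S (e n) ∈ K := by
    intro n _
    rw [apply_e_eq ha hT hS n]
    exact hKsmul _ _ (Tpow_mapsK hKT n _ h0)
  have hspan : ∀ v ∈ (Submodule.span ℂ {x : H | ∃ n : ℕ, 1 ≤ n ∧ x = e n} : Submodule ℂ H),
      S v ∈ K := by
    intro v hv
    induction hv using Submodule.span_induction with
    | mem x hx => obtain ⟨n, hn, rfl⟩ := hx; exact hen n hn
    | zero => simpa using hK0
    | add x y _ _ hx hy => rw [map_add]; exact hKadd _ hx _ hy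
    | smul c x _ hx => rw [map_smul]; exact hKsmul c _ hx
  intro v hv
  have hv' : v ∈ closure ((Submodule.span ℂ {x : H | ∃ n : ℕ, 1 ≤ n ∧ x = e n} : Submodule ℂ H)
      : Set H) := hv
  have hm : Set.MapsTo (fun v : H => S v)
      ((Submodule.span ℂ {x : H | ∃ n : ℕ, 1 ≤ n ∧ x = e n} : Submodule ℂ H) : Set H)
      (closure K) := fun x hx => subset_closure (hspan x hx)
  have hcl : S v ∈ closure (closure K) := hm.closure S.continuous hv'
  rwa [closure_closure, hKc.closure_eq] at hcl

/-! ### The norm estimate -/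

lemma norm_sq_sum {ι : Type} (v : ι → H) (hv : Orthonormal ℂ v) (s : Finset ι) (l : ι → ℂ) :
    ‖∑ i ∈ s, l i • v i‖ ^ 2 = ∑ i ∈ s, ‖l i‖ ^ 2 := by
  have h := hv.inner_sum l l s
  have h2 := norm_sq_eq_re_inner (𝕜 := ℂ) (∑ i ∈ s, l i • v i)
  rw [h2, h, map_sum]
  refine Finset.sum_congr rfl fun i _ => ?_
  simp [RCLike.conj_mul, ← Complex.ofReal_pow]

/-- tsum Cauchy-Schwarz -/
lemma tsum_cs {f g : ℕ → ℝ} (hf : ∀ n, 0 ≤ f n) (hg : ∀ n, 0 ≤ g n)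
    (hf2 : Summable fun n => f n ^ 2) (hg2 : Summable fun n => g n ^ 2) :
    Summable (fun n => f n * g n) ∧
    ∑' n, f n * g n ≤ Real.sqrt (∑' n, f n ^ 2) * Real.sqrt (∑' n, g n ^ 2) := by
  have hsumm : Summable (fun n => f n * g n) := by
    refine Summable.of_nonneg_of_le (fun n => mul_nonneg (hf n) (hg n))
      (fun n => ?_) ((hf2.add hg2).mul_left (1/2 : ℝ))
    nlinarith [sq_nonneg (f n - g n)]
  refine ⟨hsumm, ?_⟩
  refine Summable.tsum_le_of_sum_le hsumm fun s => ?_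
  have hcs : (∑ i ∈ s, f i * g i) ^ 2 ≤ (∑ i ∈ s, f i ^ 2) * ∑ i ∈ s, g i ^ 2 :=
    Finset.sum_mul_sq_le_sq_mul_sq s f g
  have h1 : (∑ i ∈ s, f i ^ 2) ≤ ∑' n, f n ^ 2 := Summable.sum_le_tsum s (fun n _ => sq_nonneg _) hf2
  have h2 : (∑ i ∈ s, g i ^ 2) ≤ ∑' n, g n ^ 2 := Summable.sum_le_tsum s (fun n _ => sq_nonneg _) hg2
  have hns : 0 ≤ ∑ i ∈ s, f i * g i :=
    Finset.sum_nonneg fun i _ => mul_nonneg (hf i) (hg i)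
  calc ∑ i ∈ s, f i * g i = Real.sqrt ((∑ i ∈ s, f i * g i) ^ 2) := (Real.sqrt_sq hns).symm
    _ ≤ Real.sqrt ((∑' n, f n ^ 2) * ∑' n, g n ^ 2) := by
        refine Real.sqrt_le_sqrt ?_
        refine hcs.trans ?_
        exact mul_le_mul h1 h2 (Finset.sum_nonneg fun i _ => sq_nonneg _)
          (tsum_nonneg fun n => sq_nonneg _)
    _ = Real.sqrt (∑' n, f n ^ 2) * Real.sqrt (∑' n, g n ^ 2) := Real.sqrt_mul
        (tsum_nonneg fun n => sq_nonneg _) _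

lemma norm_sq_tsum (f : H) : ∑' n, ‖f n‖ ^ 2 = ‖f‖ ^ 2 := by
  have h := lp.norm_rpow_eq_tsum (p := 2) (by norm_num) f
  have h2 : (2 : ENNReal).toReal = (2 : ℝ) := by norm_num
  rw [h2] at h
  simp only [← Real.rpow_natCast] at *
  norm_num at h ⊢
  rw [← h]

lemma summable_coeff_sq (f : H) : Summable fun n => ‖f n‖ ^ 2 := by
  have h := lp.memℓp f
  rw [memℓp_gen_iff (by norm_num)] at h
  have h2 : (2 : ENNReal).toReal = (2 : ℝ) := by norm_num
  rw [h2] at h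
  have h3 : ∀ n : ℕ, ‖f n‖ ^ ((2:ℝ)) = ‖f n‖ ^ (2:ℕ) := fun n => by
    rw [← Real.rpow_natCast]; norm_num
  simpa [h3] using h

lemma prod_bound (ha : ∀ n, a n ≠ 0) (hdec : ∀ n, ‖a (n + 1)‖ ≤ ‖a n‖)
    (k n : ℕ) (hn : 1 ≤ n) :
    ‖∏ i ∈ Finset.range n, a (k + i)‖ / ‖w a n‖ ≤ ‖a k‖ / ‖a 0‖ := by
  have anti : Antitone fun n => ‖a n‖ := antitone_nat_of_succ_le hdec
  obtain ⟨m, rfl⟩ : ∃ m, n = m + 1 := ⟨n - 1, by omega⟩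
  have hw : 0 < ‖w a (m+1)‖ := norm_pos_iff.2 (w_ne a ha _)
  have ha0 : 0 < ‖a 0‖ := norm_pos_iff.2 (ha 0)
  rw [div_le_div_iff₀ hw ha0]
  have h1 : ∏ i ∈ Finset.range (m+1), a (k + i)
      = (∏ i ∈ Finset.range m, a (k + (i+1))) * a (k + 0) := Finset.prod_range_succ' _ _
  have h2 : w a (m+1) = (∏ i ∈ Finset.range m, a (i+1)) * a 0 := Finset.prod_range_succ' _ _
  rw [h1, h2, norm_mul, norm_mul, norm_prod, norm_prod]
  have hp : (∏ i ∈ Finset.range m, ‖a (k + (i+1))‖) ≤ ∏ i ∈ Finset.range m, ‖a (i+1)‖ :=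
    Finset.prod_le_prod (fun i _ => norm_nonneg _) (fun i _ => anti (by omega))
  have hk0 : (k + 0) = k := by omega
  rw [hk0]
  calc (∏ i ∈ Finset.range m, ‖a (k + (i+1))‖) * ‖a k‖ * ‖a 0‖
      ≤ (∏ i ∈ Finset.range m, ‖a (i+1)‖) * ‖a k‖ * ‖a 0‖ := by
        have hkk : (0:ℝ) ≤ ‖a k‖ * ‖a 0‖ := mul_nonneg (norm_nonneg _) (norm_nonneg _)
        nlinarith [hp, norm_nonneg (a k), norm_nonneg (a 0),
          Finset.prod_nonneg (fun i (_ : i ∈ Finset.range m) => norm_nonneg (a (k+(i+1))))]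
    _ = ‖a k‖ * ((∏ i ∈ Finset.range m, ‖a (i+1)‖) * ‖a 0‖) := by ring

lemma apply_ek_bound (ha : ∀ n, a n ≠ 0) (hdec : ∀ n, ‖a (n + 1)‖ ≤ ‖a n‖)
    (hT : ∀ n, T (e n) = a n • e (n + 1)) (c : ℕ → ℂ) (s : Finset ℕ)
    (hs : ∀ n ∈ s, 1 ≤ n) (k : ℕ) :
    ‖(∑ n ∈ s, (c n / w a n) • T ^ n) (e k)‖ ≤
      (‖a k‖ / ‖a 0‖) * Real.sqrt (∑ n ∈ s, ‖c n‖ ^ 2) := by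
  have happ : (∑ n ∈ s, (c n / w a n) • T ^ n) (e k)
      = ∑ n ∈ s, (c n / w a n * ∏ i ∈ Finset.range n, a (k + i)) • e (k + n) := by
    rw [ContinuousLinearMap.sum_apply]
    refine Finset.sum_congr rfl fun n _ => ?_
    rw [ContinuousLinearMap.smul_apply, Tpow_e hT, smul_smul]
  have hortho : Orthonormal ℂ (fun n : ℕ => e (k + n)) :=
    orthonormal_e.comp _ fun i j hij => by omega
  have hsq : ‖(∑ n ∈ s, (c n / w a n) • T ^ n) (e k)‖ ^ 2
      = ∑ n ∈ s, ‖c n / w a n * ∏ i ∈ Finset.range n, a (k + i)‖ ^ 2 := by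
    rw [happ]; exact norm_sq_sum _ hortho s _
  have hterm : ∀ n ∈ s, ‖c n / w a n * ∏ i ∈ Finset.range n, a (k + i)‖ ^ 2
      ≤ (‖a k‖ / ‖a 0‖) ^ 2 * ‖c n‖ ^ 2 := by
    intro n hn
    have h1 : ‖c n / w a n * ∏ i ∈ Finset.range n, a (k + i)‖
        = ‖c n‖ * (‖∏ i ∈ Finset.range n, a (k + i)‖ / ‖w a n‖) := by
      rw [norm_mul, norm_div]; ring
    rw [h1, mul_pow]
    have h2 := prod_bound ha hdec k n (hs n hn)
    have h3 : (‖∏ i ∈ Finset.range n, a (k + i)‖ / ‖w a n‖) ^ 2 ≤ (‖a k‖ / ‖a 0‖) ^ 2 := by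
      have hnn : (0:ℝ) ≤ ‖∏ i ∈ Finset.range n, a (k + i)‖ / ‖w a n‖ :=
        div_nonneg (norm_nonneg _) (norm_nonneg _)
      nlinarith
    nlinarith [sq_nonneg (‖c n‖), sq_nonneg (‖a k‖ / ‖a 0‖), norm_nonneg (c n)]
  have hbound : ‖(∑ n ∈ s, (c n / w a n) • T ^ n) (e k)‖ ^ 2
      ≤ ((‖a k‖ / ‖a 0‖) * Real.sqrt (∑ n ∈ s, ‖c n‖ ^ 2)) ^ 2 := by
    rw [hsq, mul_pow, Real.sq_sqrt (Finset.sum_nonneg fun n _ => sq_nonneg _)]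
    calc ∑ n ∈ s, ‖c n / w a n * ∏ i ∈ Finset.range n, a (k + i)‖ ^ 2
        ≤ ∑ n ∈ s, (‖a k‖ / ‖a 0‖) ^ 2 * ‖c n‖ ^ 2 := Finset.sum_le_sum hterm
      _ = (‖a k‖ / ‖a 0‖) ^ 2 * ∑ n ∈ s, ‖c n‖ ^ 2 := by rw [Finset.mul_sum]
  have hrhsnn : (0:ℝ) ≤ (‖a k‖ / ‖a 0‖) * Real.sqrt (∑ n ∈ s, ‖c n‖ ^ 2) :=
    mul_nonneg (div_nonneg (norm_nonneg _) (norm_nonneg _)) (Real.sqrt_nonneg _)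
  nlinarith [norm_nonneg ((∑ n ∈ s, (c n / w a n) • T ^ n) (e k))]

lemma key_estimate (ha : ∀ n, a n ≠ 0) (hdec : ∀ n, ‖a (n + 1)‖ ≤ ‖a n‖)
    (hsum : Summable fun n => ‖a n‖ ^ 2)
    (hT : ∀ n, T (e n) = a n • e (n + 1)) (c : ℕ → ℂ) (s : Finset ℕ)
    (hs : ∀ n ∈ s, 1 ≤ n) :
    ‖∑ n ∈ s, (c n / w a n) • T ^ n‖ ≤
      (Real.sqrt (∑' n, ‖a n‖ ^ 2) / ‖a 0‖) * Real.sqrt (∑ n ∈ s, ‖c n‖ ^ 2) := by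
  set B := Real.sqrt (∑ n ∈ s, ‖c n‖ ^ 2) with hB
  set A := Real.sqrt (∑' n, ‖a n‖ ^ 2) with hA
  have hBnn : 0 ≤ B := Real.sqrt_nonneg _
  have hAnn : 0 ≤ A := Real.sqrt_nonneg _
  have ha0 : 0 < ‖a 0‖ := norm_pos_iff.2 (ha 0)
  refine ContinuousLinearMap.opNorm_le_bound _
    (mul_nonneg (div_nonneg hAnn ha0.le) hBnn) fun x => ?_
  set Sc := ∑ n ∈ s, (c n / w a n) • T ^ n with hSc
  have hHS : HasSum (fun k => x k • Sc (e k)) (Sc x) := by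
    have h := (hasSum_e x).mapL Sc
    simpa [map_smul] using h
  have hsummx : Summable fun k => ‖x k‖ * ‖a k‖ :=
    (tsum_cs (fun k => norm_nonneg _) (fun k => norm_nonneg _)
      (summable_coeff_sq x) hsum).1
  have hterm : ∀ k, ‖x k • Sc (e k)‖ ≤ (‖x k‖ * ‖a k‖) * (B / ‖a 0‖) := by
    intro k
    rw [norm_smul]
    calc ‖x k‖ * ‖Sc (e k)‖ ≤ ‖x k‖ * ((‖a k‖ / ‖a 0‖) * B) := by
          refine mul_le_mul_of_nonneg_left ?_ (norm_nonneg _)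
          exact apply_ek_bound ha hdec hT c s hs k
      _ = (‖x k‖ * ‖a k‖) * (B / ‖a 0‖) := by ring
  have hsumm' : Summable fun k => ‖x k • Sc (e k)‖ :=
    Summable.of_nonneg_of_le (fun k => norm_nonneg _) hterm (hsummx.mul_right _)
  have h1 : ‖Sc x‖ ≤ ∑' k, ‖x k • Sc (e k)‖ := by
    rw [← hHS.tsum_eq]
    exact norm_tsum_le_tsum_norm hsumm'
  have h2 : ∑' k, ‖x k • Sc (e k)‖ ≤ ∑' k, (‖x k‖ * ‖a k‖) * (B / ‖a 0‖) :=
    Summable.tsum_le_tsum hterm hsumm' (hsummx.mul_right _)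
  have h3 : ∑' k, (‖x k‖ * ‖a k‖) * (B / ‖a 0‖)
      = (∑' k, ‖x k‖ * ‖a k‖) * (B / ‖a 0‖) := tsum_mul_right
  have h4 : ∑' k, ‖x k‖ * ‖a k‖ ≤ ‖x‖ * A := by
    have h := (tsum_cs (fun k => norm_nonneg _) (fun k => norm_nonneg _)
      (summable_coeff_sq x) hsum).2
    rwa [norm_sq_tsum x, Real.sqrt_sq (norm_nonneg x)] at h
  calc ‖Sc x‖ ≤ (∑' k, ‖x k‖ * ‖a k‖) * (B / ‖a 0‖) := by rw [← h3]; exact h1.trans h2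
    _ ≤ (‖x‖ * A) * (B / ‖a 0‖) := by
        exact mul_le_mul_of_nonneg_right h4 (div_nonneg hBnn ha0.le)
    _ = (A / ‖a 0‖) * B * ‖x‖ := by ring

/-! ### The inverse construction -/

/-- term sequence for the inverse construction -/
def g (a : ℕ → ℂ) (T : H →L[ℂ] H) (f : H) (n : ℕ) : H →L[ℂ] H :=
  if n = 0 then 0 else (f n / w a n) • T ^ n

lemma sum_g_eq (f : H) (s : Finset ℕ) :
    ∑ n ∈ s, g a T f n = ∑ n ∈ s.erase 0, (f n / w a n) • T ^ n := by
  rw [← Finset.sum_erase s (show g a T f 0 = 0 by unfold g; rw [if_pos rfl])]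
  exact Finset.sum_congr rfl fun n hn => by
    simp [g, Finset.ne_of_mem_erase hn]

lemma partial_bound (ha : ∀ n, a n ≠ 0) (hdec : ∀ n, ‖a (n + 1)‖ ≤ ‖a n‖)
    (hsum : Summable fun n => ‖a n‖ ^ 2)
    (hT : ∀ n, T (e n) = a n • e (n + 1)) (f : H) (s : Finset ℕ) :
    ‖∑ n ∈ s, g a T f n‖ ≤
      (Real.sqrt (∑' n, ‖a n‖ ^ 2) / ‖a 0‖) * Real.sqrt (∑ n ∈ s, ‖f n‖ ^ 2) := by
  rw [sum_g_eq]
  refine (key_estimate ha hdec hsum hT _ _ fun n hn => ?_).trans ?_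
  · have h := Finset.ne_of_mem_erase hn; omega
  · refine mul_le_mul_of_nonneg_left (Real.sqrt_le_sqrt ?_)
      (div_nonneg (Real.sqrt_nonneg _) (norm_nonneg _))
    exact Finset.sum_le_sum_of_subset_of_nonneg (Finset.erase_subset 0 s)
      fun n _ _ => sq_nonneg _

lemma summable_g (ha : ∀ n, a n ≠ 0) (hdec : ∀ n, ‖a (n + 1)‖ ≤ ‖a n‖)
    (hsum : Summable fun n => ‖a n‖ ^ 2)
    (hT : ∀ n, T (e n) = a n • e (n + 1)) (f : H) :
    Summable (g a T f) := by
  set C := Real.sqrt (∑' n, ‖a n‖ ^ 2) / ‖a 0‖ with hC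
  have hCpos : 0 < C := by
    have ha0 : 0 < ‖a 0‖ := norm_pos_iff.2 (ha 0)
    refine div_pos (Real.sqrt_pos.2 ?_) ha0
    have h1 : ‖a 0‖ ^ 2 ≤ ∑' n, ‖a n‖ ^ 2 := by
      have h := Summable.sum_le_tsum {0} (fun n _ => sq_nonneg ‖a n‖) hsum
      simpa using h
    nlinarith
  rw [summable_iff_vanishing_norm]
  intro ε hε
  obtain ⟨s, hs⟩ := summable_iff_vanishing_norm.1 (summable_coeff_sq f) ((ε / C) ^ 2)
    (by positivity)
  refine ⟨s, fun t ht => ?_⟩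
  have hb := partial_bound ha hdec hsum hT f t
  have h2 : ∑ n ∈ t, ‖f n‖ ^ 2 < (ε / C) ^ 2 := by
    have h := hs t ht
    have hnn : 0 ≤ ∑ n ∈ t, ‖f n‖ ^ 2 := Finset.sum_nonneg fun n _ => sq_nonneg _
    rwa [Real.norm_of_nonneg hnn] at h
  have h3 : Real.sqrt (∑ n ∈ t, ‖f n‖ ^ 2) < ε / C := by
    rw [show (ε / C) ^ 2 = (ε/C) * (ε/C) by ring] at h2
    exact (Real.sqrt_lt' (by positivity)).2 (by nlinarith)
  calc ‖∑ n ∈ t, g a T f n‖ ≤ C * Real.sqrt (∑ n ∈ t, ‖f n‖ ^ 2) := hb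
    _ < C * (ε / C) := by exact mul_lt_mul_of_pos_left h3 hCpos
    _ = ε := by field_simp

/-- the inverse operator -/
def Sf (a : ℕ → ℂ) (T : H →L[ℂ] H) (f : H) : H →L[ℂ] H := ∑' n, g a T f n

lemma Sf_mem (ha : ∀ n, a n ≠ 0) (hdec : ∀ n, ‖a (n + 1)‖ ≤ ‖a n‖)
    (hsum : Summable fun n => ‖a n‖ ^ 2)
    (hT : ∀ n, T (e n) = a n • e (n + 1)) (f : H) : Sf a T f ∈ polyAlg T := by
  have hsummable := summable_g ha hdec hsum hT f
  have htend := hsummable.hasSum.tendsto_sum_nat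
  refine mem_closure_of_tendsto htend (Filter.Eventually.of_forall fun N => ?_)
  refine sum_mem fun n _ => ?_
  unfold g
  split_ifs with h
  · exact zero_mem _
  · exact SMulMemClass.smul_mem _ (Tpow_mem_adjoin n (by omega))

lemma Sf_apply_e0 (ha : ∀ n, a n ≠ 0) (hdec : ∀ n, ‖a (n + 1)‖ ≤ ‖a n‖)
    (hsum : Summable fun n => ‖a n‖ ^ 2)
    (hT : ∀ n, T (e n) = a n • e (n + 1)) (f : H) :
    (Sf a T f) (e 0) = f - (f 0 : ℂ) • e 0 := by
  have hsummable := summable_g ha hdec hsum hT f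
  have h1 : HasSum (fun n => (g a T f n) (e 0)) ((Sf a T f) (e 0)) :=
    hsummable.hasSum.mapL (ContinuousLinearMap.apply ℂ H (e 0))
  have h2 : ∀ n, (g a T f n) (e 0) = Function.update (fun n : ℕ => (f n : ℂ) • e n) 0 0 n := by
    intro n
    rcases Nat.eq_zero_or_pos n with rfl | hn
    · simp [g]
    · have hne : n ≠ 0 := by omega
      rw [Function.update_of_ne hne, g, if_neg hne, ContinuousLinearMap.smul_apply,
        Tpow_e0 hT, smul_smul, div_mul_cancel₀ _ (w_ne a ha n)]
  have h3 : HasSum (Function.update (fun n : ℕ => (f n : ℂ) • e n) 0 0)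
      ((0 : H) - (f 0 : ℂ) • e 0 + f) := (hasSum_e f).update 0 0
  have h2' : (fun n => (g a T f n) (e 0)) = Function.update (fun n : ℕ => (f n : ℂ) • e n) 0 0 :=
    funext h2
  rw [h2'] at h1
  rw [h1.unique h3]
  abel

lemma Sf_norm (ha : ∀ n, a n ≠ 0) (hdec : ∀ n, ‖a (n + 1)‖ ≤ ‖a n‖)
    (hsum : Summable fun n => ‖a n‖ ^ 2)
    (hT : ∀ n, T (e n) = a n • e (n + 1)) (f : H) :
    ‖Sf a T f‖ ≤ (Real.sqrt (∑' n, ‖a n‖ ^ 2) / ‖a 0‖) * ‖f‖ := by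
  have hsummable := summable_g ha hdec hsum hT f
  have htend := hsummable.hasSum.tendsto_sum_nat
  refine le_of_tendsto' htend.norm fun N => ?_
  refine (partial_bound ha hdec hsum hT f _).trans ?_
  refine mul_le_mul_of_nonneg_left ?_ (div_nonneg (Real.sqrt_nonneg _) (norm_nonneg _))
  have h1 : ∑ n ∈ Finset.range N, ‖f n‖ ^ 2 ≤ ∑' n, ‖f n‖ ^ 2 :=
    Summable.sum_le_tsum _ (fun n _ => sq_nonneg _) (summable_coeff_sq f)
  calc Real.sqrt (∑ n ∈ Finset.range N, ‖f n‖ ^ 2) ≤ Real.sqrt (∑' n, ‖f n‖ ^ 2) :=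
        Real.sqrt_le_sqrt h1
    _ = ‖f‖ := by rw [norm_sq_tsum f, Real.sqrt_sq (norm_nonneg f)]

end Aux
/-- For a weighted shift with nonzero weights, `|a_0| ≥ |a_1| ≥ ⋯` and `∑ |a_n|² < ∞`:
`F : J ↦ {S e₀ : S ∈ J}` is an inclusion-preserving bijection from the closed two-sided
ideals of `A_T` onto the closed `T`-invariant subspaces of `H₁`. -/
theorem ideal_subspace_lattice_iso (a : ℕ → ℂ) (ha : ∀ n, a n ≠ 0)
    (hdec : ∀ n, ‖a (n + 1)‖ ≤ ‖a n‖)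
    (hsum : Summable fun n => ‖a n‖ ^ 2)
    (T : H →L[ℂ] H) (hT : ∀ n, T (e n) = a n • e (n + 1)) :
    (∀ J : Set (H →L[ℂ] H), IsClosedIdeal T J → IsInvSubspace T (Fmap J)) ∧
    (∀ K : Set H, IsInvSubspace T K →
       ∃ J : Set (H →L[ℂ] H), IsClosedIdeal T J ∧ Fmap J = K) ∧
    (∀ J₁ J₂ : Set (H →L[ℂ] H), IsClosedIdeal T J₁ → IsClosedIdeal T J₂ →
       Fmap J₁ = Fmap J₂ → J₁ = J₂) ∧
    (∀ J₁ J₂ : Set (H →L[ℂ] H), IsClosedIdeal T J₁ → IsClosedIdeal T J₂ →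
       (J₁ ⊆ J₂ ↔ Fmap J₁ ⊆ Fmap J₂)) := by
  set C := Real.sqrt (∑' n, ‖a n‖ ^ 2) / ‖a 0‖ with hC
  have hCnn : 0 ≤ C := div_nonneg (Real.sqrt_nonneg _) (norm_nonneg _)
  have heval_cont : Continuous (fun S : H →L[ℂ] H => S (e 0)) :=
    (ContinuousLinearMap.apply ℂ H (e 0)).continuous
  -- the inverse map is Lipschitz
  have hSf_lip : LipschitzWith C.toNNReal (Sf a T) := by
    refine LipschitzWith.of_dist_le_mul fun u v => ?_
    have hdiff : Sf a T u - Sf a T v = Sf a T (u - v) := by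
      refine eq_of_apply_e0_eq ha hT
        (polyAlg_sub (Sf_mem ha hdec hsum hT u) (Sf_mem ha hdec hsum hT v))
        (Sf_mem ha hdec hsum hT (u - v)) ?_
      rw [ContinuousLinearMap.sub_apply, Sf_apply_e0 ha hdec hsum hT,
        Sf_apply_e0 ha hdec hsum hT, Sf_apply_e0 ha hdec hsum hT]
      have hcoord : ((u - v) : H) 0 = u 0 - v 0 := by
        rw [lp.coeFn_sub]; rfl
      rw [hcoord, sub_smul]
      abel
    rw [dist_eq_norm, dist_eq_norm, hdiff, Real.coe_toNNReal C hCnn]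
    exact Sf_norm ha hdec hsum hT (u - v)
  -- the order-preserving implication on ideals
  have key : ∀ J₁ J₂ : Set (H →L[ℂ] H), IsClosedIdeal T J₁ → IsClosedIdeal T J₂ →
      Fmap J₁ ⊆ Fmap J₂ → J₁ ⊆ J₂ := by
    intro J₁ J₂ h1 h2 hsub S hS
    obtain ⟨S', hS', hval⟩ := hsub ⟨S, hS, rfl⟩
    have heq : S' = S := eq_of_apply_e0_eq ha hT (h2.1 hS') (h1.1 hS) hval
    rwa [← heq]
  have fmono : ∀ J₁ J₂ : Set (H →L[ℂ] H), J₁ ⊆ J₂ → Fmap J₁ ⊆ Fmap J₂ := by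
    rintro J₁ J₂ hsub x ⟨S, hS, rfl⟩
    exact ⟨S, hsub hS, rfl⟩
  refine ⟨?_, ?_, ?_, ?_⟩
  · -- part 1
    intro J hJ
    obtain ⟨hJsub, hJc, hJ0, hJadd, hJsmul, hJmul⟩ := hJ
    refine ⟨?_, ?_, ⟨0, hJ0, by simp⟩, ?_, ?_, ?_⟩
    · rintro x ⟨S, hS, rfl⟩
      exact mem_H1_iff.2 (coord_zero_of_mem hT (hJsub hS) (e 0))
    · -- closedness of the image
      refine IsSeqClosed.isClosed ?_
      intro x f hxmem hxt
      choose S hSmem hSeq using hxmem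
      have hxj0 : ∀ j, (x j : H) 0 = 0 := fun j => by
        rw [← hSeq j]
        exact coord_zero_of_mem hT (hJsub (hSmem j)) (e 0)
      have hphi_eq : ∀ j, Sf a T (x j) = S j := by
        intro j
        refine eq_of_apply_e0_eq ha hT (Sf_mem ha hdec hsum hT (x j))
          (hJsub (hSmem j)) ?_
        rw [Sf_apply_e0 ha hdec hsum hT, hxj0 j, zero_smul, sub_zero]
        exact (hSeq j).symm
      have hcs : CauchySeq (fun j => Sf a T (x j)) :=
        hSf_lip.uniformContinuous.comp_cauchySeq hxt.cauchySeq
      obtain ⟨L, hL⟩ := cauchySeq_tendsto_of_complete hcs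
      have hLJ : L ∈ J :=
        hJc.mem_of_tendsto hL (Filter.Eventually.of_forall fun j => by
          rw [hphi_eq j]; exact hSmem j)
      refine ⟨L, hLJ, ?_⟩
      have h1 : Filter.Tendsto (fun j => (Sf a T (x j)) (e 0)) Filter.atTop (nhds (L (e 0))) :=
        (heval_cont.tendsto L).comp hL
      have h2 : (fun j => (Sf a T (x j)) (e 0)) = x := funext fun j => by
        rw [hphi_eq j]; exact hSeq j
      rw [h2] at h1
      exact tendsto_nhds_unique h1 hxt
    · rintro x ⟨S, hS, rfl⟩ y ⟨S', hS', rfl⟩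
      exact ⟨S + S', hJadd _ hS _ hS', by simp⟩
    · rintro c x ⟨S, hS, rfl⟩
      exact ⟨c • S, hJsmul c _ hS, by simp⟩
    · rintro x ⟨S, hS, rfl⟩
      exact ⟨T * S, (hJmul T T_mem S hS).1, by simp [ContinuousLinearMap.mul_apply]⟩
  · -- part 2 : surjectivity
    intro K hK
    refine ⟨{S | S ∈ polyAlg T ∧ S (e 0) ∈ K}, ⟨fun S hS => hS.1, ?_, ?_, ?_, ?_, ?_⟩, ?_⟩
    · have : {S : H →L[ℂ] H | S ∈ polyAlg T ∧ S (e 0) ∈ K}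
          = polyAlg T ∩ ((fun S : H →L[ℂ] H => S (e 0)) ⁻¹' K) := rfl
      rw [this]
      exact IsClosed.inter isClosed_closure (hK.2.1.preimage heval_cont)
    · exact ⟨polyAlg_zero, by simpa using hK.2.2.1⟩
    · intro x hx y hy
      exact ⟨polyAlg_add hx.1 hy.1, by
        rw [ContinuousLinearMap.add_apply]; exact hK.2.2.2.1 _ hx.2 _ hy.2⟩
    · intro c x hx
      exact ⟨polyAlg_smul c hx.1, by
        rw [ContinuousLinearMap.smul_apply]; exact hK.2.2.2.2.1 c _ hx.2⟩
    · intro b hb x hx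
      constructor
      · exact ⟨polyAlg_mul hb hx.1, by
          rw [ContinuousLinearMap.mul_apply]; exact mapsK_of_mem hK hb _ hx.2⟩
      · refine ⟨polyAlg_mul hx.1 hb, ?_⟩
        rw [ContinuousLinearMap.mul_apply]
        exact mapsH1_of_mem ha hT hK hx.1 hx.2 _
          (mem_H1_iff.2 (coord_zero_of_mem hT hb (e 0)))
    · refine Set.Subset.antisymm ?_ ?_
      · rintro x ⟨S, hS, rfl⟩
        exact hS.2
      · intro f hf
        have hf0 : (f : H) 0 = 0 := mem_H1_iff.1 (hK.1 hf)
        have happ : (Sf a T f) (e 0) = f := by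
          rw [Sf_apply_e0 ha hdec hsum hT, hf0]
          simp
        exact ⟨Sf a T f, ⟨Sf_mem ha hdec hsum hT f, by rw [happ]; exact hf⟩, happ⟩
  · -- part 3 : injectivity
    intro J₁ J₂ h1 h2 heq
    exact Set.Subset.antisymm (key J₁ J₂ h1 h2 (heq ▸ subset_rfl))
      (key J₂ J₁ h2 h1 (heq ▸ subset_rfl))
  · -- part 4 : order isomorphism
    intro J₁ J₂ h1 h2
    exact ⟨fmono J₁ J₂, key J₁ J₂ h1 h2⟩
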